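/- arXiv:2510.11453 — 2 statements merged into one kernel-verified Lean document; each statement's English description precedes it below -/
import Mathlib

section
/- Worst-case ℓ₁ rate bound at the optimal scaling: Let f(x) = exp(−2|x|) be the Laplacian, extended multiplicatively to ℝ². For any δ > 0 and any prime q, define D(δ) := √(1 + 1/δ²) + 1/δ > 1 and set s := 4/ln(D(δ)). Then W^(1)_{q,δ}(s)² := exp(−4δ/s)/f_s(L_q) > ((D(δ) − 1)/(D(δ) + 1)) · E(q·ln(D(δ))/4) / D(δ)^δ, where L_q := ∪_{z∈ℤ}((z,z) + qℤ²) and E(x) := (coth(x) + 4x·e^{2x}/(e^{2x} − 1)²)^{-1}. -/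
set_option maxHeartbeats 1000000

noncomputable section

/-- The Laplacian function `f(x) = exp(-2|x|)`. -/
def lap (x : ℝ) : ℝ := Real.exp (-2 * |x|)

/-- The lattice `L_q = ∪_{z∈ℤ} ((z,z) + qℤ²) ⊂ ℝ²`. -/
def LqSet (q : ℕ) : Set (ℝ × ℝ) :=
  {v | ∃ z w₁ w₂ : ℤ, v.1 = z + q * w₁ ∧ v.2 = z + q * w₂}

/-- `f_s(L_q)`: the sum over `L_q` of the multiplicative extension of `f` to `ℝ²`,
scaled by `s` (i.e. `f_s(x) = f(x/s)`). -/
def fsLq (f : ℝ → ℝ) (s : ℝ) (q : ℕ) : ℝ :=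
  ∑' v : LqSet q, f ((v : ℝ × ℝ).1 / s) * f ((v : ℝ × ℝ).2 / s)

/-- `coth x = (e^x + e^{-x})/(e^x - e^{-x})`. -/
def coth' (x : ℝ) : ℝ := (Real.exp x + Real.exp (-x)) / (Real.exp x - Real.exp (-x))

/-- The "fudge factor" `E(x) = (coth(x) + 4x·e^{2x}/(e^{2x} − 1)²)⁻¹`. -/
def El (x : ℝ) : ℝ :=
  (coth' x + 4 * x * Real.exp (2 * x) / (Real.exp (2 * x) - 1) ^ 2)⁻¹

/-- `D(δ) = √(1 + 1/δ²) + 1/δ`. -/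
def Dd (δ : ℝ) : ℝ := Real.sqrt (1 + 1 / δ ^ 2) + 1 / δ

/-- Key analytic inequality: `2(1 - e^{-L}) < (1 + e^{-L})·L` for `L > 0`
(equivalently, `tanh(L/2) < L/2`). -/
lemma key_tanh {L : ℝ} (hL : 0 < L) : 2 * (1 - Real.exp (-L)) < (1 + Real.exp (-L)) * L := by
  set h : ℝ → ℝ := fun x => (2 + x) * Real.exp (-x) + x - 2 with hh
  have hderiv : ∀ x : ℝ, HasDerivAt h (1 - (1 + x) * Real.exp (-x)) x := by
    intro x
    have h1 : HasDerivAt (fun x : ℝ => Real.exp (-x)) (-Real.exp (-x)) x := by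
      simpa using (hasDerivAt_neg x).exp
    have h2 : HasDerivAt (fun x : ℝ => (2 + x)) 1 x := by
      simpa using (hasDerivAt_id x).const_add 2
    have h3 := h2.mul h1
    have h5 := (h3.add (hasDerivAt_id x)).sub_const 2
    refine h5.congr_deriv ?_
    ring
  have hmono : StrictMonoOn h (Set.Ici (0:ℝ)) := by
    apply strictMonoOn_of_deriv_pos (convex_Ici 0)
    · exact Continuous.continuousOn (by continuity)
    · intro x hx
      rw [interior_Ici] at hx
      rw [(hderiv x).deriv]
      have : (1 + x) * Real.exp (-x) < 1 := by
        have hlt : 1 + x < Real.exp x := by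
          have := Real.add_one_lt_exp (x := x) (ne_of_gt (Set.mem_Ioi.mp hx))
          linarith
        have hexp : Real.exp (-x) > 0 := Real.exp_pos _
        have : (1 + x) * Real.exp (-x) < Real.exp x * Real.exp (-x) :=
          mul_lt_mul_of_pos_right hlt hexp
        rwa [← Real.exp_add, add_neg_cancel, Real.exp_zero] at this
      linarith
  have h0 : h 0 = 0 := by simp [hh]
  have hpos : 0 < h L := by
    have := hmono Set.self_mem_Ici (Set.mem_Ici.mpr hL.le) hL
    rwa [h0] at this
  have : (2 + L) * Real.exp (-L) + L - 2 > 0 := hpos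
  nlinarith [Real.exp_pos (-L)]

/-- The two-sided geometric sum over `ℤ`. -/
lemma hasSum_W {r : ℝ} (h0 : 0 < r) (h1 : r < 1) {q c : ℕ} (hc : c < q) :
    HasSum (fun k : ℤ => r ^ ((c : ℤ) + (q : ℤ) * k).natAbs)
      ((r ^ c + r ^ (q - c)) * (1 - r ^ q)⁻¹) := by
  have hRnn : (0:ℝ) ≤ r ^ q := by positivity
  have hR1 : r ^ q < 1 := pow_lt_one₀ h0.le h1 (by omega)
  have hgeo : HasSum (fun n : ℕ => (r ^ q) ^ n) (1 - r ^ q)⁻¹ :=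
    hasSum_geometric_of_lt_one hRnn hR1
  have h₁ : HasSum (fun n : ℕ => r ^ ((c : ℤ) + (q : ℤ) * (n : ℤ)).natAbs)
      (r ^ c * (1 - r ^ q)⁻¹) := by
    have := hgeo.mul_left (r ^ c)
    refine this.congr_fun fun n => ?_
    have he : ((c : ℤ) + (q : ℤ) * (n : ℤ)) = ((c + q * n : ℕ) : ℤ) := by push_cast; ring
    rw [he, Int.natAbs_natCast, pow_add, pow_mul]
  have h₂ : HasSum (fun n : ℕ => r ^ ((c : ℤ) + (q : ℤ) * (-((n : ℤ) + 1))).natAbs)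
      (r ^ (q - c) * (1 - r ^ q)⁻¹) := by
    have := hgeo.mul_left (r ^ (q - c))
    refine this.congr_fun fun n => ?_
    have he : ((c : ℤ) + (q : ℤ) * (-((n : ℤ) + 1))) = -(((q - c + q * n : ℕ) : ℤ)) := by
      push_cast [Nat.cast_sub hc.le]
      ring
    rw [he, Int.natAbs_neg, Int.natAbs_natCast, pow_add, pow_mul]
  have := HasSum.of_nat_of_neg_add_one
    (f := fun k : ℤ => r ^ ((c : ℤ) + (q : ℤ) * k).natAbs) h₁ h₂
  convert this using 1
  ring

lemma summable_int_pow {r : ℝ} (h0 : 0 < r) (h1 : r < 1) :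
    Summable (fun k : ℤ => r ^ k.natAbs) := by
  have hg : Summable fun n : ℕ => r ^ n := summable_geometric_of_lt_one h0.le h1
  refine Summable.of_nat_of_neg_add_one (hg.congr fun n => ?_) ((hg.mul_left r).congr fun n => ?_)
  · simp
  · rw [show (-((n:ℤ) + 1)).natAbs = n + 1 by omega, pow_succ]
    ring

lemma summable_g {r : ℝ} (h0 : 0 < r) (h1 : r < 1) :
    Summable (fun p : ℤ × ℤ => r ^ p.1.natAbs * r ^ p.2.natAbs) := by
  apply Summable.mul_of_nonneg (summable_int_pow h0 h1) (summable_int_pow h0 h1)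
  · intro k
    positivity
  · intro k
    positivity

/-- Worst-case ℓ₁ rate bound at the optimal scaling `s = 4/ln(D(δ))`:
`W^(1)_{q,δ}(s)² = exp(−4δ/s)/f_s(L_q) > ((D(δ)−1)/(D(δ)+1))·E(q·ln(D(δ))/4)/D(δ)^δ`. -/
theorem worst_case_ell1_rate (δ : ℝ) (hδ : 0 < δ) (q : ℕ) (hq : Nat.Prime q)
    (s : ℝ) (hs : s = 4 / Real.log (Dd δ)) :
    Real.exp (-4 * δ / s) / fsLq lap s q >
      (Dd δ - 1) / (Dd δ + 1) * El (q * Real.log (Dd δ) / 4) / Dd δ ^ δ := by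
  have hq2 : 2 ≤ q := hq.two_le
  have hqpos : 0 < q := by omega
  have hqR : (0:ℝ) < q := by exact_mod_cast hqpos
  have hqZ : (0:ℤ) < q := by exact_mod_cast hqpos
  have hq0 : (q:ℤ) ≠ 0 := hqZ.ne'
  -- D > 1
  have hD : 1 < Dd δ := by
    have h1 : (1:ℝ) < 1 + 1/δ^2 := by
      have : (0:ℝ) < 1/δ^2 := by positivity
      linarith
    have h2 : 1 < Real.sqrt (1 + 1/δ^2) := by
      have := Real.sqrt_lt_sqrt (by norm_num : (0:ℝ) ≤ 1) h1
      rwa [Real.sqrt_one] at this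
    have h3 : 0 < 1/δ := by positivity
    unfold Dd
    linarith
  have hDpos : 0 < Dd δ := by linarith
  set L := Real.log (Dd δ) with hLdef
  have hL : 0 < L := Real.log_pos hD
  have hspos : 0 < s := by rw [hs]; positivity
  set r := Real.exp (-(L/2)) with hrdef
  have hr0 : 0 < r := Real.exp_pos _
  have hr1 : r < 1 := by rw [hrdef, Real.exp_lt_one_iff]; linarith
  set R := r ^ q with hRdef
  have hR0 : 0 < R := by positivity
  have hR1 : R < 1 := pow_lt_one₀ hr0.le hr1 (by omega)
  set x := r ^ 2 with hxdef
  have hx0 : 0 < x := by positivity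
  have hx1 : x < 1 := pow_lt_one₀ hr0.le hr1 (by omega)
  have hxL : x = Real.exp (-L) := by
    rw [hxdef, hrdef, ← Real.exp_nat_mul]
    congr 1
    push_cast
    ring
  have h1x : (0:ℝ) < 1 - x := by linarith
  have h1R : (0:ℝ) < 1 - R := by linarith
  have h1R2 : (0:ℝ) < 1 - R^2 := by nlinarith
  -- lap at integer points
  have hlap : ∀ a : ℤ, lap ((a : ℝ)/s) = r ^ a.natAbs := by
    intro a
    unfold lap
    rw [abs_div, abs_of_pos hspos, hrdef, ← Real.exp_nat_mul]
    congr 1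
    have habs : |(a:ℝ)| = (a.natAbs : ℝ) := by
      rw [← Int.cast_abs, Int.abs_eq_natAbs, Int.cast_natCast]
    rw [habs, hs]
    have hLne : L ≠ 0 := hL.ne'
    field_simp
    ring
  -- the injective parametrization
  set ψ : Fin q × ℤ × ℤ → ℤ × ℤ :=
    fun z => (((z.1 : ℕ) : ℤ) + (q:ℤ) * z.2.1, ((z.1 : ℕ) : ℤ) + (q:ℤ) * z.2.2) with hψdef
  have hψinj : Function.Injective ψ := by
    rintro ⟨⟨c, hc⟩, m, n⟩ ⟨⟨c', hc'⟩, m', n'⟩ h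
    simp only [hψdef, Prod.mk.injEq] at h
    obtain ⟨h1', h2'⟩ := h
    have hcZ : (c:ℤ) < q := by exact_mod_cast hc
    have hcZ' : (c':ℤ) < q := by exact_mod_cast hc'
    have hc0 : (0:ℤ) ≤ c := Int.natCast_nonneg c
    have hc0' : (0:ℤ) ≤ c' := Int.natCast_nonneg c'
    have hk2 : (c:ℤ) - c' = q * (m' - m) := by linear_combination h1'
    have hd : m' - m = 0 := by
      by_contra hdne
      rcases (by omega : 1 ≤ m' - m ∨ m' - m ≤ -1) with h1 | h1
      · have : (q:ℤ) * 1 ≤ q * (m' - m) := mul_le_mul_of_nonneg_left h1 hqZ.le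
        linarith
      · have : (q:ℤ) * (m' - m) ≤ q * (-1) := mul_le_mul_of_nonneg_left h1 hqZ.le
        linarith
    have hcc : c = c' := by
      have hz : (c:ℤ) - c' = 0 := by rw [hk2, hd, mul_zero]
      omega
    subst hcc
    have hmm : m = m' := by omega
    have hnn : n = n' := by
      have hqn : (q:ℤ) * n = q * n' := by linarith
      exact mul_left_cancel₀ hq0 hqn
    subst hmm
    subst hnn
    rfl
  -- map into LqSet
  have hmem : ∀ z : Fin q × ℤ × ℤ,
      ((((((z.1 : ℕ) : ℤ) + (q:ℤ) * z.2.1 : ℤ) : ℝ),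
        (((((z.1 : ℕ) : ℤ) + (q:ℤ) * z.2.2 : ℤ) : ℝ))) : ℝ × ℝ) ∈ LqSet q := by
    intro z
    exact ⟨((z.1 : ℕ) : ℤ), z.2.1, z.2.2, by push_cast; ring, by push_cast; ring⟩
  set Φ : Fin q × ℤ × ℤ → LqSet q := fun z => ⟨_, hmem z⟩ with hΦdef
  have hΦbij : Function.Bijective Φ := by
    constructor
    · intro z z' h
      have h' := congrArg Subtype.val h
      simp only [hΦdef] at h'
      rw [Prod.ext_iff] at h'
      obtain ⟨h1, h2⟩ := h'
      dsimp only at h1 h2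
      apply hψinj
      rw [hψdef]
      dsimp only
      exact Prod.ext (by exact_mod_cast h1) (by exact_mod_cast h2)
    · rintro ⟨⟨v1, v2⟩, z, w1, w2, h1, h2⟩
      dsimp only at h1 h2
      have hc1 : 0 ≤ z % q := Int.emod_nonneg z hq0
      have hc2 : z % q < q := Int.emod_lt_of_pos z hqZ
      have hcq : (z % q).toNat < q := by omega
      refine ⟨⟨⟨(z % q).toNat, hcq⟩, z / q + w1, z / q + w2⟩, ?_⟩
      apply Subtype.ext
      rw [hΦdef]
      have hz : (((z % q).toNat : ℕ) : ℤ) = z % q := Int.toNat_of_nonneg hc1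
      have hzz : z % q + q * (z / q) = z := Int.emod_add_mul_ediv z q
      have e1 : ((((z % q).toNat : ℕ) : ℤ) + (q:ℤ) * (z / q + w1)) = z + q * w1 := by
        rw [hz]; linear_combination hzz
      have e2 : ((((z % q).toNat : ℕ) : ℤ) + (q:ℤ) * (z / q + w2)) = z + q * w2 := by
        rw [hz]; linear_combination hzz
      refine Prod.ext ?_ ?_
      · show (((((z % q).toNat : ℕ) : ℤ) + (q:ℤ) * (z / q + w1) : ℤ) : ℝ) = v1
        rw [e1, h1]; push_cast; ring
      · show (((((z % q).toNat : ℕ) : ℤ) + (q:ℤ) * (z / q + w2) : ℤ) : ℝ) = v2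
        rw [e2, h2]; push_cast; ring
  set e : Fin q × ℤ × ℤ ≃ LqSet q := Equiv.ofBijective Φ hΦbij with hedef
  -- summability of the full family
  have hgsum := summable_g hr0 hr1
  have hF0 : Summable ((fun p : ℤ × ℤ => r ^ p.1.natAbs * r ^ p.2.natAbs) ∘ ψ) :=
    hgsum.comp_injective hψinj
  have hF : Summable (fun z : Fin q × ℤ × ℤ =>
      r ^ (((z.1 : ℕ) : ℤ) + (q:ℤ) * z.2.1).natAbs
        * r ^ (((z.1 : ℕ) : ℤ) + (q:ℤ) * z.2.2).natAbs) :=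
    hF0.congr fun z => by simp only [Function.comp_apply, hψdef]
  -- the tsum computation
  have hfs : fsLq lap s q = ∑' z : Fin q × ℤ × ℤ,
      r ^ (((z.1 : ℕ) : ℤ) + (q:ℤ) * z.2.1).natAbs
        * r ^ (((z.1 : ℕ) : ℤ) + (q:ℤ) * z.2.2).natAbs := by
    rw [fsLq, ← Equiv.tsum_eq e]
    congr 1
    funext z
    rw [hedef]
    simp only [Equiv.ofBijective_apply, hΦdef]
    rw [hlap, hlap]
  -- summability of inner families
  have hinner : ∀ c : Fin q, Summable (fun p : ℤ × ℤ =>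
      r ^ (((c : ℕ) : ℤ) + (q:ℤ) * p.1).natAbs * r ^ (((c : ℕ) : ℤ) + (q:ℤ) * p.2).natAbs) := by
    intro c
    have hinj2 : Function.Injective
        (fun p : ℤ × ℤ => (((c : ℕ) : ℤ) + (q:ℤ) * p.1, ((c : ℕ) : ℤ) + (q:ℤ) * p.2)) := by
      intro p p' h
      simp only [Prod.mk.injEq] at h
      obtain ⟨ha, hb⟩ := h
      have h1 : p.1 = p'.1 := mul_left_cancel₀ hq0 (by linarith)
      have h2 : p.2 = p'.2 := mul_left_cancel₀ hq0 (by linarith)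
      exact Prod.ext h1 h2
    have h0 := hgsum.comp_injective hinj2
    exact h0.congr fun p => by simp only [Function.comp_apply]
  -- evaluate
  have hfs2 : fsLq lap s q = ∑ c : Fin q,
      ((r ^ (c:ℕ) + r ^ (q - (c:ℕ))) * (1 - R)⁻¹) ^ 2 := by
    rw [hfs, Summable.tsum_prod' hF (fun c => hinner c), tsum_fintype]
    apply Finset.sum_congr rfl
    intro c _
    have hWc := hasSum_W hr0 hr1 (q := q) (c := (c:ℕ)) c.isLt
    rw [← hRdef] at hWc
    rw [sq]
    exact (hWc.mul hWc (hinner c)).tsum_eq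
  -- closed form for the finite sum
  have hsum_eval : (∑ c : Fin q, ((r ^ (c:ℕ) + r ^ (q - (c:ℕ))) * (1 - R)⁻¹) ^ 2)
      = ((1 + x) * ((1 - R^2)/(1 - x)) + 2 * q * R) / (1 - R)^2 := by
    have step1 : ∀ c ∈ Finset.range q,
        ((r ^ c + r ^ (q - c)) * (1 - R)⁻¹) ^ 2
          = (x ^ c + x ^ (q - c) + 2 * R) * ((1 - R)⁻¹)^2 := by
      intro c hc
      rw [Finset.mem_range] at hc
      rw [mul_pow]
      congr 1
      have h1 : (r ^ c) ^ 2 = x ^ c := by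
        rw [hxdef, ← pow_mul, ← pow_mul, Nat.mul_comm]
      have h2 : (r ^ (q - c)) ^ 2 = x ^ (q - c) := by
        rw [hxdef, ← pow_mul, ← pow_mul, Nat.mul_comm]
      have h3 : r ^ c * r ^ (q - c) = R := by
        rw [← pow_add, Nat.add_sub_cancel' hc.le, hRdef]
      linear_combination h1 + h2 + 2 * h3
    rw [Fin.sum_univ_eq_sum_range (fun c => ((r ^ c + r ^ (q - c)) * (1 - R)⁻¹) ^ 2) q]
    rw [Finset.sum_congr rfl step1, ← Finset.sum_mul]
    have hgeom : ∑ c ∈ Finset.range q, x ^ c = (1 - R^2)/(1 - x) := by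
      rw [geom_sum_eq (by linarith : x ≠ 1)]
      have hxq : x ^ q = R ^ 2 := by
        rw [hxdef, hRdef, ← pow_mul, ← pow_mul, Nat.mul_comm]
      rw [hxq, show R^2 - 1 = -(1 - R^2) by ring, show x - 1 = -(1-x) by ring, neg_div_neg_eq]
    have hsplit : (∑ c ∈ Finset.range q, (x ^ c + x ^ (q - c) + 2 * R))
        = (1 + x) * ((1 - R^2)/(1 - x)) + 2 * q * R := by
      rw [Finset.sum_add_distrib, Finset.sum_add_distrib]
      have hrefl : ∑ c ∈ Finset.range q, x ^ (q - c) = x * ((1 - R^2)/(1 - x)) := by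
        rw [← Finset.sum_range_reflect (fun c => x ^ (q - c)) q, ← hgeom, Finset.mul_sum]
        apply Finset.sum_congr rfl
        intro c hc
        rw [Finset.mem_range] at hc
        rw [show q - (q - 1 - c) = c + 1 by omega, pow_succ]
        ring
      have hconst : ∑ _c ∈ Finset.range q, 2 * R = 2 * q * R := by
        rw [Finset.sum_const, Finset.card_range, nsmul_eq_mul]
        ring
      rw [hgeom, hrefl, hconst]
      ring
    rw [hsplit, inv_pow, ← div_eq_mul_inv]
  -- rewrite the RHS pieces
  have hDexp : Dd δ = Real.exp L := (Real.exp_log hDpos).symm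
  have hprod : Real.exp (-L) * Real.exp L = 1 := by
    rw [← Real.exp_add]; simp
  have hfrac : (Dd δ - 1)/(Dd δ + 1) = (1 - x)/(1 + x) := by
    rw [hDexp, hxL]
    rw [div_eq_div_iff (by positivity : (0:ℝ) < Real.exp L + 1).ne'
      (by positivity : (0:ℝ) < 1 + Real.exp (-L)).ne']
    linear_combination 2 * hprod
  have hRexp : R = Real.exp (-((q:ℝ) * L / 2)) := by
    rw [hRdef, hrdef, ← Real.exp_nat_mul]
    congr 1
    ring
  have hEl : El ((q:ℝ) * L / 4) = (1 - R)^2 / ((1 - R^2) + q * L * R) := by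
    set t : ℝ := (q:ℝ) * L / 4 with htdef
    have ht : 0 < t := by positivity
    set a := Real.exp t with hadef
    set b := Real.exp (-t) with hbdef
    have hab : a * b = 1 := by rw [hadef, hbdef, ← Real.exp_add]; simp
    have hb2 : b ^ 2 = R := by
      rw [hbdef, hRexp, ← Real.exp_nat_mul]
      congr 1
      push_cast
      ring
    have ha0 : 0 < a := Real.exp_pos _
    have hb0 : 0 < b := Real.exp_pos _
    have hba : b < a := by
      rw [hadef, hbdef]
      exact Real.exp_lt_exp.mpr (by linarith)
    have hA : Real.exp (2 * t) = a ^ 2 := by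
      rw [hadef, ← Real.exp_nat_mul]
      norm_num
    have ha2R : a ^ 2 * R = 1 := by
      rw [← hb2]
      nlinarith [hab]
    have hcoth : coth' t = (1 + R)/(1 - R) := by
      rw [coth', ← hadef, ← hbdef]
      rw [div_eq_div_iff (by linarith : (0:ℝ) < a - b).ne' h1R.ne']
      rw [← hb2]
      linear_combination (-2*b) * hab
    have hterm : 4 * t * Real.exp (2*t) / (Real.exp (2*t) - 1)^2 = q * L * R / (1 - R)^2 := by
      rw [hA]
      have h4t : 4 * t = (q:ℝ) * L := by rw [htdef]; ring
      rw [h4t]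
      have hR2a : (0:ℝ) < a^2 - 1 := by nlinarith
      rw [div_eq_div_iff (by positivity) (by positivity)]
      linear_combination ((q:ℝ) * L * (R - a^2)) * ha2R
    rw [El, hcoth, hterm]
    have hcomb : (1 + R)/(1 - R) + (q:ℝ) * L * R / (1 - R)^2
        = ((1 - R^2) + q * L * R) / (1 - R)^2 := by
      field_simp
      ring
    rw [hcomb, inv_div]
  have hpow : Dd δ ^ δ = Real.exp (L * δ) := Real.rpow_def_of_pos hDpos δ
  have hexp4 : Real.exp (-4 * δ / s) = Real.exp (-(δ * L)) := by
    congr 1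
    rw [hs]
    have hLne : L ≠ 0 := hL.ne'
    field_simp
  -- put together
  rw [hfs2, hsum_eval, hfrac, hEl, hpow, hexp4]
  set Y : ℝ := (1 - R^2) + q * L * R with hYdef
  have hYpos : 0 < Y := by
    rw [hYdef]
    exact add_pos h1R2 (mul_pos (mul_pos hqR hL) hR0)
  set N : ℝ := (1 + x) * ((1 - R^2)/(1 - x)) + 2 * q * R with hNdef
  have hNpos : 0 < N := by
    rw [hNdef]
    have := mul_pos (by linarith : (0:ℝ) < 1 + x) (div_pos h1R2 h1x)
    have := mul_pos (mul_pos (by norm_num : (0:ℝ) < 2) hqR) hR0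
    linarith
  have hTpos : 0 < N / (1 - R)^2 := div_pos hNpos (by positivity)
  rw [gt_iff_lt, div_lt_div_iff₀ (Real.exp_pos _) hTpos]
  have hexp1 : Real.exp (-(δ * L)) * Real.exp (L * δ) = 1 := by
    rw [← Real.exp_add, show -(δ*L) + L*δ = 0 by ring, Real.exp_zero]
  -- key scalar inequality
  have hkey : 2 * (1 - x) < (1 + x) * L := by rw [hxL]; exact key_tanh hL
  have h2 : 2 * (1 - x) * ((q:ℝ) * R) < (1 + x) * L * ((q:ℝ) * R) :=
    mul_lt_mul_of_pos_right hkey (mul_pos hqR hR0)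
  have hcore : N < (1 + x) * Y / (1 - x) := by
    rw [lt_div_iff₀ h1x]
    have hN : N * (1 - x) = (1 + x) * (1 - R^2) + 2 * q * R * (1 - x) := by
      rw [hNdef]
      field_simp
    rw [hN, hYdef]
    nlinarith [h2]
  have hc_lt : (1 - x)/(1 + x) * ((1 - R)^2 / Y) * (N / (1 - R)^2) < 1 := by
    have hfin : (1 - x)/(1 + x) * ((1 - R)^2 / Y) * (N / (1 - R)^2)
        = N * (1 - x) / ((1 + x) * Y) := by
      field_simp
    rw [hfin, div_lt_one (by positivity)]
    calc N * (1 - x) < ((1 + x) * Y / (1 - x)) * (1 - x) :=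
          mul_lt_mul_of_pos_right hcore h1x
      _ = (1 + x) * Y := div_mul_cancel₀ _ h1x.ne'
  calc (1 - x)/(1 + x) * ((1 - R)^2 / Y) * (N / (1 - R)^2)
      < 1 := hc_lt
    _ = Real.exp (-(δ * L)) * Real.exp (L * δ) := hexp1.symm

end
end

section
/- Average-case Laplacian rate bound: Let f(x) = exp(−2|x|) be the Laplacian, extended multiplicatively to ℝ². For any r > 0 and any prime q, letting μ_{r,r} := E_{e←D_r}[f_r(e)] for the Laplacian channel D_r (either the continuous distribution on ℝ with density f_r(x)/r, or the discrete distribution on ℤ with mass f_r(x)/f_r(ℤ)), it holds that A^(1)_{q,r}(r)² := μ_{r,r}²/f_r(L_q) > (tanh(2/r)/4)·E(q/r), where L_q := ∪_{z∈ℤ}((z,z) + qℤ²) and E(x) := (coth(x) + 4x·e^{2x}/(e^{2x} − 1)²)^{-1}. -/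
noncomputable section

/-! ### Auxiliary lemmas -/

section Aux

open Real MeasureTheory Set

lemma sinh_lt_mul_cosh {x : ℝ} (hx : 0 < x) : Real.sinh x < x * Real.cosh x := by
  have key : StrictMonoOn (fun y : ℝ => y * Real.cosh y - Real.sinh y) (Set.Ici 0) := by
    apply strictMonoOn_of_deriv_pos (convex_Ici 0)
    · exact (continuous_id.mul Real.continuous_cosh).sub Real.continuous_sinh |>.continuousOn
    · intro y hy
      rw [interior_Ici] at hy
      have h1 : HasDerivAt (fun y : ℝ => y * Real.cosh y - Real.sinh y)
          (1 * Real.cosh y + y * Real.sinh y - Real.cosh y) y :=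
        ((hasDerivAt_id y).mul (Real.hasDerivAt_cosh y)).sub (Real.hasDerivAt_sinh y)
      rw [h1.deriv]
      have h2 : 0 < Real.sinh y := Real.sinh_pos_iff.mpr hy
      have h3 : 0 < y := hy
      nlinarith
  have h0 := key (Set.self_mem_Ici) (Set.mem_Ici.mpr hx.le) hx
  simp only [Real.cosh_zero, Real.sinh_zero, mul_zero, zero_mul, sub_zero] at h0
  linarith

lemma key_ineq {r : ℝ} (hr : 0 < r) :
    r * (1 - Real.exp (-2/r) ^ 2) < 2 * (1 + Real.exp (-2/r) ^ 2) := by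
  have hx : 0 < 2 / r := by positivity
  have h := sinh_lt_mul_cosh hx
  rw [Real.sinh_eq, Real.cosh_eq] at h
  have e1 : Real.exp (-(2/r)) = Real.exp (-2/r) := by rw [neg_div]
  have e2 : Real.exp (2/r) * Real.exp (-2/r) = 1 := by
    rw [← Real.exp_add, neg_div, add_neg_cancel, Real.exp_zero]
  set E := Real.exp (2/r)
  set a := Real.exp (-2/r)
  rw [e1] at h
  have ha : 0 < a := Real.exp_pos _
  have hE : 0 < E := Real.exp_pos _
  have h2 : r * (E - a) < 2 * (E + a) := by
    have h3 : (E - a) / 2 * r < 2 / r * ((E + a) / 2) * r := by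
      exact mul_lt_mul_of_pos_right h hr
    have h4 : 2 / r * ((E + a) / 2) * r = E + a := by field_simp
    nlinarith
  nlinarith [mul_lt_mul_of_pos_right h2 ha, e2, mul_pos ha ha]

lemma hasSum_geom_int {a : ℝ} (ha : 0 ≤ a) (ha1 : a < 1) (q c : ℕ) (hc : c < q) :
    HasSum (fun w : ℤ => a ^ ((c : ℤ) + q * w).natAbs)
      ((a ^ c + a ^ (q - c)) * (1 - a ^ q)⁻¹) := by
  have hq : 0 < q := lt_of_le_of_lt (Nat.zero_le c) hc
  have haq : a ^ q < 1 := pow_lt_one₀ ha ha1 hq.ne'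
  have haq0 : 0 ≤ a ^ q := pow_nonneg ha q
  have h1 : HasSum (fun n : ℕ => a ^ ((c : ℤ) + q * n).natAbs) (a ^ c * (1 - a ^ q)⁻¹) := by
    have e : ∀ n : ℕ, a ^ ((c : ℤ) + q * n).natAbs = a ^ c * (a ^ q) ^ n := by
      intro n
      have h : (c : ℤ) + q * n = ((c + q * n : ℕ) : ℤ) := by push_cast; ring
      rw [h, Int.natAbs_natCast, pow_add, pow_mul]
    simpa only [e] using (hasSum_geometric_of_lt_one haq0 haq).mul_left (a ^ c)
  have h2 : HasSum (fun n : ℕ => a ^ ((c : ℤ) + q * (-((n : ℤ) + 1))).natAbs)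
      (a ^ (q - c) * (1 - a ^ q)⁻¹) := by
    have e : ∀ n : ℕ, a ^ ((c : ℤ) + q * (-((n : ℤ) + 1))).natAbs = a ^ (q - c) * (a ^ q) ^ n := by
      intro n
      have h : (c : ℤ) + q * (-((n : ℤ) + 1)) = -(((q - c) + q * n : ℕ) : ℤ) := by
        push_cast [Nat.cast_sub hc.le]
        ring
      rw [h, Int.natAbs_neg, Int.natAbs_natCast, pow_add, pow_mul]
    simpa only [e] using (hasSum_geometric_of_lt_one haq0 haq).mul_left (a ^ (q - c))
  have h3 := HasSum.of_nat_of_neg_add_one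
    (f := fun w : ℤ => a ^ ((c : ℤ) + q * w).natAbs) h1 h2
  convert h3 using 1
  ring

lemma hasSum_geom_int' {a : ℝ} (ha : 0 ≤ a) (ha1 : a < 1) (q : ℕ) (hq : 0 < q) (z : ℤ) :
    HasSum (fun w : ℤ => a ^ (z + q * w).natAbs)
      ((a ^ (z % q).toNat + a ^ (q - (z % q).toNat)) * (1 - a ^ q)⁻¹) := by
  have hq' : (0 : ℤ) < q := by exact_mod_cast hq
  have hm1 : 0 ≤ z % q := Int.emod_nonneg z hq'.ne'
  have hm2 : z % q < q := Int.emod_lt_of_pos z hq'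
  have hc : (z % q).toNat < q := by omega
  have base := hasSum_geom_int ha ha1 q (z % q).toNat hc
  have h := (Equiv.addLeft (z / q)).hasSum_iff.mpr base
  convert h using 2 with w
  simp only [Equiv.coe_addLeft, Function.comp]
  have harg : z + (q : ℤ) * w = ((z % q).toNat : ℤ) + q * (z / q + w) := by
    rw [Int.toNat_of_nonneg hm1]
    linear_combination (-1 : ℤ) * Int.emod_add_mul_ediv z (q : ℤ)
  rw [harg]

lemma hasSum_geom_int_all {a : ℝ} (ha : 0 ≤ a) (ha1 : a < 1) :
    HasSum (fun k : ℤ => a ^ k.natAbs) ((1 + a) * (1 - a)⁻¹) := by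
  have h := hasSum_geom_int' ha ha1 1 one_pos 0
  simp only [Nat.cast_one, Int.zero_emod, Int.toNat_zero, pow_zero, pow_one, Nat.sub_zero,
    zero_add, one_mul] at h
  exact h

lemma lap_int (r : ℝ) (hr : 0 < r) (z : ℤ) :
    lap ((z : ℝ) / r) = Real.exp (-2 / r) ^ z.natAbs := by
  rw [lap, abs_div, abs_of_pos hr, ← Real.exp_nat_mul]
  congr 1
  rw [Nat.cast_natAbs]
  push_cast
  ring

def lqEquiv (q : ℕ) (hq : 0 < q) : ℤ × ℤ ≃ LqSet q :=
  Equiv.ofBijective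
    (fun p => ⟨((p.1 : ℝ), ((p.1 + q * p.2 : ℤ) : ℝ)), p.1, 0, p.2, by
      push_cast; constructor <;> ring⟩)
    (by
      constructor
      · rintro ⟨z, w⟩ ⟨z', w'⟩ h
        have h1 : ((z : ℤ) : ℝ) = ((z' : ℤ) : ℝ) := congrArg (fun x : LqSet q => (x : ℝ × ℝ).1) h
        have h2 : ((z + q * w : ℤ) : ℝ) = ((z' + q * w' : ℤ) : ℝ) :=
          congrArg (fun x : LqSet q => (x : ℝ × ℝ).2) h
        have hz : z = z' := by exact_mod_cast h1
        subst hz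
        have h3 : (z + q * w : ℤ) = (z + q * w' : ℤ) := by exact_mod_cast h2
        have hq' : (q : ℤ) ≠ 0 := by exact_mod_cast hq.ne'
        have : w = w' := by
          have := add_left_cancel h3
          exact mul_left_cancel₀ hq' this
        rw [this]
      · rintro ⟨v, z, w₁, w₂, h1, h2⟩
        refine ⟨(z + q * w₁, w₂ - w₁), ?_⟩
        apply Subtype.ext
        apply Prod.ext
        · simp only []
          rw [h1]; push_cast; ring
        · simp only []
          rw [h2]; push_cast; ring)

lemma fsLq_eq_tsum (r : ℝ) (hr : 0 < r) (q : ℕ) (hq : 0 < q) :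
    fsLq lap r q = ∑' p : ℤ × ℤ,
      Real.exp (-2 / r) ^ p.1.natAbs * Real.exp (-2 / r) ^ (p.1 + q * p.2).natAbs := by
  rw [fsLq, ← Equiv.tsum_eq (lqEquiv q hq)]
  congr 1
  funext p
  simp only [lqEquiv, Equiv.ofBijective_apply]
  show lap ((p.1 : ℝ) / r) * lap (((p.1 + q * p.2 : ℤ) : ℝ) / r) = _
  rw [lap_int r hr p.1, lap_int r hr (p.1 + q * p.2)]

def finIntEquiv (q : ℕ) (hq : 0 < q) : Fin q × ℤ ≃ ℤ :=
  Equiv.ofBijective (fun p => ((p.1 : ℕ) : ℤ) + q * p.2)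
    (by
      have hq' : (0 : ℤ) < q := by exact_mod_cast hq
      constructor
      · rintro ⟨c, m⟩ ⟨c', m'⟩ h
        simp only at h
        have hc : ((c : ℕ) : ℤ) % q = ((c' : ℕ) : ℤ) % q := by
          have := congrArg (fun t => t % (q : ℤ)) h
          simpa [Int.add_mul_emod_self_left] using this
        have hcc : ((c : ℕ) : ℤ) = ((c' : ℕ) : ℤ) := by
          rwa [Int.emod_eq_of_lt (by positivity) (by exact_mod_cast c.isLt),
            Int.emod_eq_of_lt (by positivity) (by exact_mod_cast c'.isLt)] at hc
        have hceq : c = c' := by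
          apply Fin.ext; exact_mod_cast hcc
        subst hceq
        have hm : m = m' := by
          have h2 : (q : ℤ) * m = q * m' := by linarith [h]
          exact mul_left_cancel₀ hq'.ne' h2
        rw [hm]
      · intro z
        refine ⟨(⟨(z % q).toNat, ?_⟩, z / q), ?_⟩
        · have h1 : 0 ≤ z % q := Int.emod_nonneg z hq'.ne'
          have h2 : z % q < q := Int.emod_lt_of_pos z hq'
          omega
        · simp only
          rw [Int.toNat_of_nonneg (Int.emod_nonneg z hq'.ne')]
          exact Int.emod_add_mul_ediv z q)

lemma tsum_G {a : ℝ} (ha : 0 ≤ a) (ha1 : a < 1) (q : ℕ) (hq : 0 < q) :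
    ∑' p : ℤ × ℤ, a ^ p.1.natAbs * a ^ (p.1 + q * p.2).natAbs
      = ∑ c ∈ Finset.range q, ((a ^ c + a ^ (q - c)) * (1 - a ^ q)⁻¹) ^ 2 := by
  set Tv : ℕ → ℝ := fun c => (a ^ c + a ^ (q - c)) * (1 - a ^ q)⁻¹ with hTv
  have haq : a ^ q < 1 := pow_lt_one₀ ha ha1 hq.ne'
  have hinv : 0 ≤ (1 - a ^ q)⁻¹ := by
    rw [inv_nonneg]; linarith
  have hT : ∀ z : ℤ, HasSum (fun w : ℤ => a ^ z.natAbs * a ^ (z + q * w).natAbs)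
      (a ^ z.natAbs * Tv (z % q).toNat) :=
    fun z => (hasSum_geom_int' ha ha1 q hq z).mul_left _
  have houter : Summable (fun z : ℤ => a ^ z.natAbs * Tv (z % q).toNat) := by
    apply Summable.of_nonneg_of_le
    · intro z
      apply mul_nonneg (pow_nonneg ha _)
      apply mul_nonneg (by positivity) hinv
    · intro z
      have hb : Tv (z % q).toNat ≤ 2 * (1 - a ^ q)⁻¹ := by
        apply mul_le_mul_of_nonneg_right _ hinv
        have h1 : a ^ (z % q).toNat ≤ 1 := pow_le_one₀ ha ha1.le
        have h2 : a ^ (q - (z % q).toNat) ≤ 1 := pow_le_one₀ ha ha1.le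
        linarith
      calc a ^ z.natAbs * Tv (z % q).toNat ≤ a ^ z.natAbs * (2 * (1 - a ^ q)⁻¹) :=
            mul_le_mul_of_nonneg_left hb (pow_nonneg ha _)
        _ = _ := rfl
    · exact ((hasSum_geom_int_all ha ha1).summable).mul_right _
  have hG : Summable (fun p : ℤ × ℤ => a ^ p.1.natAbs * a ^ (p.1 + q * p.2).natAbs) := by
    rw [summable_prod_of_nonneg]
    · refine ⟨fun z => (hT z).summable, ?_⟩
      apply houter.congr
      intro z
      exact ((hT z).tsum_eq).symm
    · intro p
      exact mul_nonneg (pow_nonneg ha _) (pow_nonneg ha _)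
  rw [Summable.tsum_prod' hG (fun z => (hT z).summable)]
  have step1 : ∑' z : ℤ, ∑' w : ℤ, a ^ z.natAbs * a ^ (z + q * w).natAbs
      = ∑' z : ℤ, a ^ z.natAbs * Tv (z % q).toNat := by
    congr 1; funext z; exact (hT z).tsum_eq
  rw [step1]
  rw [← Equiv.tsum_eq (finIntEquiv q hq) (fun z => a ^ z.natAbs * Tv (z % q).toNat)]
  have step2 : ∀ p : Fin q × ℤ,
      a ^ (finIntEquiv q hq p).natAbs * Tv ((finIntEquiv q hq p) % q).toNat
        = a ^ (((p.1 : ℕ) : ℤ) + q * p.2).natAbs * Tv p.1 := by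
    intro p
    have harg : (finIntEquiv q hq p) = ((p.1 : ℕ) : ℤ) + q * p.2 := rfl
    rw [harg]
    congr 2
    have : (((p.1 : ℕ) : ℤ) + q * p.2) % q = ((p.1 : ℕ) : ℤ) % q := by
      simp [Int.add_mul_emod_self_left]
    rw [this, Int.emod_eq_of_lt (by positivity) (by exact_mod_cast p.1.isLt)]
    simp
  rw [tsum_congr step2]
  have hsummable2 : Summable (fun p : Fin q × ℤ =>
      a ^ (((p.1 : ℕ) : ℤ) + q * p.2).natAbs * Tv p.1) := by
    have h := ((finIntEquiv q hq).summable_iff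
      (f := fun z : ℤ => a ^ z.natAbs * Tv (z % q).toNat)).mpr houter
    apply h.congr
    intro p
    simpa using (step2 p)
  have hinner2 : ∀ c : Fin q, Summable (fun m : ℤ =>
      a ^ (((c : ℕ) : ℤ) + q * m).natAbs * Tv c) :=
    fun c => ((hasSum_geom_int ha ha1 q c c.isLt).mul_right _).summable
  rw [Summable.tsum_prod' hsummable2 hinner2, tsum_fintype]
  rw [← Fin.sum_univ_eq_sum_range (fun c => (Tv c) ^ 2) q]
  apply Finset.sum_congr rfl
  intro c _
  have := ((hasSum_geom_int ha ha1 q c c.isLt).mul_right (Tv c)).tsum_eq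
  rw [this]
  rw [hTv]
  ring

lemma sum_sq {a : ℝ} (ha : 0 < a) (ha1 : a < 1) (q : ℕ) (hq : 0 < q) :
    ∑ c ∈ Finset.range q, ((a ^ c + a ^ (q - c)) * (1 - a ^ q)⁻¹) ^ 2
      = ((1 + a ^ 2) * ((1 - (a ^ q) ^ 2) * (1 - a ^ 2)⁻¹) + 2 * q * a ^ q)
          * ((1 - a ^ q)⁻¹) ^ 2 := by
  have ha2 : a ^ 2 ≠ 1 := by nlinarith
  have step : ∀ c ∈ Finset.range q, ((a ^ c + a ^ (q - c)) * (1 - a ^ q)⁻¹) ^ 2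
      = ((a ^ 2) ^ c + (a ^ 2) ^ (q - c) + 2 * a ^ q) * ((1 - a ^ q)⁻¹) ^ 2 := by
    intro c hc
    rw [Finset.mem_range] at hc
    have hcross : a ^ c * a ^ (q - c) = a ^ q := by
      rw [← pow_add]
      congr 1
      omega
    have e1 : (a ^ 2) ^ c = (a ^ c) ^ 2 := by rw [← pow_mul, ← pow_mul, Nat.mul_comm]
    have e2 : (a ^ 2) ^ (q - c) = (a ^ (q - c)) ^ 2 := by
      rw [← pow_mul, ← pow_mul, Nat.mul_comm]
    rw [e1, e2]
    nlinarith [hcross]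
  rw [Finset.sum_congr rfl step, ← Finset.sum_mul, Finset.sum_add_distrib,
    Finset.sum_add_distrib]
  have g1 : ∑ c ∈ Finset.range q, (a ^ 2) ^ c = (1 - (a ^ q) ^ 2) * (1 - a ^ 2)⁻¹ := by
    rw [geom_sum_eq ha2, ← pow_mul, mul_comm 2 q, pow_mul]
    have hne : a ^ 2 - 1 ≠ 0 := by intro h; apply ha2; linarith
    have hne2 : (1 : ℝ) - a ^ 2 ≠ 0 := by intro h; apply ha2; linarith
    field_simp
    ring
  have g2 : ∑ c ∈ Finset.range q, (a ^ 2) ^ (q - c)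
      = a ^ 2 * ((1 - (a ^ q) ^ 2) * (1 - a ^ 2)⁻¹) := by
    rw [← Finset.sum_range_reflect (fun c => (a ^ 2) ^ (q - c)) q]
    have e : ∀ c ∈ Finset.range q, (a ^ 2) ^ (q - (q - 1 - c)) = a ^ 2 * (a ^ 2) ^ c := by
      intro c hc
      rw [Finset.mem_range] at hc
      have : q - (q - 1 - c) = c + 1 := by omega
      rw [this, pow_succ]
      ring
    rw [Finset.sum_congr rfl e, ← Finset.mul_sum, g1]
  have g3 : ∑ _c ∈ Finset.range q, 2 * a ^ q = 2 * q * a ^ q := by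
    rw [Finset.sum_const, Finset.card_range]
    push_cast
    ring
  rw [g1, g2, g3]
  ring

lemma integral_lap (r : ℝ) (hr : 0 < r) :
    (∫ e : ℝ, lap (e / r) / r * lap (e / r)) = 1 / 2 := by
  have h1 : ∀ e : ℝ, lap (e / r) / r * lap (e / r) = Real.exp (-(4 / r) * |e|) * r⁻¹ := by
    intro e
    rw [lap, abs_div, abs_of_pos hr]
    have h : -(4 / r) * |e| = (-2 * (|e| / r)) + (-2 * (|e| / r)) := by ring
    rw [h, Real.exp_add]
    field_simp
  simp only [h1]
  rw [MeasureTheory.integral_mul_const]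
  have h2 : (∫ e : ℝ, Real.exp (-(4 / r) * |e|)) = 2 * ∫ x in Ioi (0:ℝ), Real.exp (-(4/r) * x) :=
    integral_comp_abs (f := fun x => Real.exp (-(4/r) * x))
  have h3 : (∫ x in Ioi (0:ℝ), Real.exp (-(4/r) * x)) = r / 4 := by
    have h4 : ∀ x : ℝ, Real.exp (-(4/r) * x) = (fun y => Real.exp (-y)) ((4/r) * x) := by
      intro x; simp [neg_mul]
    simp only [h4]
    rw [MeasureTheory.integral_comp_mul_left_Ioi (fun y => Real.exp (-y)) 0
      (by positivity : (0:ℝ) < 4/r)]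
    rw [mul_zero, integral_exp_neg_Ioi, neg_zero, Real.exp_zero, smul_eq_mul, mul_one]
    rw [inv_div]
  rw [h2, h3]
  field_simp
  ring

lemma coth_helper {x u : ℝ} (hu : 1 < u) :
    (u + u⁻¹) / (u - u⁻¹) + 4 * x * u ^ 2 / (u ^ 2 - 1) ^ 2
      = ((1 - ((u ^ 2)⁻¹) ^ 2) + 4 * x * (u ^ 2)⁻¹) / (1 - (u ^ 2)⁻¹) ^ 2 := by
  have hu0 : 0 < u := by linarith
  have hp2 : 1 < u ^ 2 := by nlinarith
  have hp4 : 1 < u ^ 4 := by nlinarith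
  have h2 : u ^ 2 - 1 ≠ 0 := by intro h; nlinarith
  have h4 : u ≠ 0 := hu0.ne'
  have h5 : u ^ 4 - 1 ≠ 0 := by intro h; nlinarith
  have e1 : u + u⁻¹ = (u ^ 2 + 1) / u := by field_simp
  have e2 : u - u⁻¹ = (u ^ 2 - 1) / u := by field_simp
  have e3 : (1 - (u ^ 2)⁻¹) = (u ^ 2 - 1) / u ^ 2 := by field_simp
  have e4 : (1 - ((u ^ 2)⁻¹) ^ 2) = (u ^ 4 - 1) / u ^ 4 := by
    field_simp
  rw [e1, e2, e3, e4, div_div_div_cancel_right₀]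
  field_simp
  ring
  exact h4


lemma tanh_val {r : ℝ} (hr : 0 < r) :
    Real.tanh (2 / r) = (1 - Real.exp (-2/r) ^ 2) / (1 + Real.exp (-2/r) ^ 2) := by
  rw [Real.tanh_eq_sinh_div_cosh, Real.sinh_eq, Real.cosh_eq]
  have e1 : Real.exp (-(2/r)) = Real.exp (-2/r) := by rw [neg_div]
  have e2 : Real.exp (2/r) * Real.exp (-2/r) = 1 := by
    rw [← Real.exp_add, neg_div, add_neg_cancel, Real.exp_zero]
  rw [e1]
  set E := Real.exp (2/r)
  set a := Real.exp (-2/r)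
  have ha : 0 < a := Real.exp_pos _
  have hE : 0 < E := Real.exp_pos _
  rw [div_eq_div_iff (by positivity) (by positivity)]
  linear_combination a * e2

lemma El_val {r : ℝ} (hr : 0 < r) (q : ℕ) (hq0 : 0 < q) :
    El ((q : ℝ) / r) = (1 - Real.exp ((q : ℝ) * (-2/r))) ^ 2 /
      ((1 - Real.exp ((q : ℝ) * (-2/r)) ^ 2) + 4 * ((q : ℝ)/r) * Real.exp ((q : ℝ) * (-2/r))) := by
  have hxpos : 0 < (q : ℝ) / r := by positivity
  set u := Real.exp ((q : ℝ) / r) with hu_def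
  have hu : 1 < u := by
    rw [hu_def, ← Real.exp_zero]
    exact Real.exp_lt_exp.mpr hxpos
  have hv : Real.exp (2 * ((q : ℝ) / r)) = u ^ 2 := by
    rw [hu_def, two_mul, Real.exp_add, sq]
  have hb : Real.exp ((q : ℝ) * (-2/r)) = (u ^ 2)⁻¹ := by
    rw [← hv, ← Real.exp_neg]
    congr 1
    field_simp
  rw [El, coth', Real.exp_neg, ← hu_def, hv, hb, coth_helper hu, inv_div]

end Aux

set_option maxHeartbeats 1600000 in
/-- Average-case Laplacian rate bound: for both the continuous Laplacian channel
(density `f_r(x)/r` on ℝ) and the discrete one (mass `f_r(x)/f_r(ℤ)` on ℤ), with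
`μ_{r,r} = E_{e←D_r}[f_r(e)]`, we have `μ_{r,r}²/f_r(L_q) > (tanh(2/r)/4)·E(q/r)`. -/
theorem avg_case_laplacian_rate (r : ℝ) (hr : 0 < r) (q : ℕ) (hq : Nat.Prime q) :
    (∫ e : ℝ, lap (e / r) / r * lap (e / r)) ^ 2 / fsLq lap r q >
        Real.tanh (2 / r) / 4 * El (q / r) ∧
      ((∑' k : ℤ, lap ((k : ℝ) / r) * lap ((k : ℝ) / r)) /
            (∑' k : ℤ, lap ((k : ℝ) / r))) ^ 2 / fsLq lap r q >
        Real.tanh (2 / r) / 4 * El (q / r) := by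
  have hq2 : 2 ≤ q := hq.two_le
  have hq0 : 0 < q := by omega
  have hqR : (0:ℝ) < q := by exact_mod_cast hq0
  set a := Real.exp (-2/r) with ha_def
  have ha0 : 0 < a := Real.exp_pos _
  have ha1 : a < 1 := by
    rw [ha_def, ← Real.exp_zero]
    apply Real.exp_lt_exp.mpr
    have h2r : (0:ℝ) < 2 / r := by positivity
    rw [neg_div]
    linarith
  have ha2 : 0 < 1 - a ^ 2 := by nlinarith
  set b := a ^ q with hb_def
  have hb0 : 0 < b := pow_pos ha0 q
  have hb1 : b < 1 := pow_lt_one₀ ha0.le ha1 hq0.ne'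
  have hb2 : 0 < 1 - b ^ 2 := by nlinarith
  have hb3 : 0 < 1 - b := by linarith
  have hbexp : Real.exp ((q:ℝ) * (-2/r)) = b := by
    rw [hb_def, ha_def, ← Real.exp_nat_mul]
  clear_value a b
  have hF : fsLq lap r q
      = ((1 + a ^ 2) * ((1 - b ^ 2) * (1 - a ^ 2)⁻¹) + 2 * q * b) * ((1 - b)⁻¹) ^ 2 := by
    rw [fsLq_eq_tsum r hr q hq0, tsum_G (Real.exp_pos _).le (by rw [← ha_def]; exact ha1) q hq0,
      sum_sq (Real.exp_pos _) (by rw [← ha_def]; exact ha1) q hq0, ← ha_def, ← hb_def]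
  have hD : 0 < (1 - b ^ 2) + 4 * ((q:ℝ)/r) * b := by
    have : 0 < 4 * ((q:ℝ)/r) * b := by positivity
    linarith
  have hFpos : 0 < fsLq lap r q := by
    rw [hF]
    have h1 : 0 < (1 + a ^ 2) * ((1 - b ^ 2) * (1 - a ^ 2)⁻¹) :=
      mul_pos (by positivity) (mul_pos hb2 (inv_pos.mpr ha2))
    have h2 : 0 < 2 * (q:ℝ) * b := by positivity
    have h3 : (0:ℝ) < ((1 - b)⁻¹) ^ 2 := by positivity
    nlinarith
  have hk := key_ineq hr
  rw [← ha_def] at hk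
  have key2 : 2 * (q:ℝ) * b * (1 - a ^ 2) < 4 * ((q:ℝ)/r) * b * (1 + a ^ 2) := by
    have hpos : 0 < 2 * (q:ℝ) * b / r := by positivity
    have h := mul_lt_mul_of_pos_left hk hpos
    have eL : 2 * (q:ℝ) * b / r * (r * (1 - a ^ 2)) = 2 * q * b * (1 - a ^ 2) := by
      field_simp
    have eR : 2 * (q:ℝ) * b / r * (2 * (1 + a ^ 2)) = 4 * ((q:ℝ)/r) * b * (1 + a ^ 2) := by
      field_simp
      ring
    rw [eL, eR] at h
    exact h
  have hmain : Real.tanh (2/r) / 4 * El (q/r) < (1/2:ℝ) ^ 2 / fsLq lap r q := by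
    rw [tanh_val hr, ← ha_def, El_val hr q hq0, hbexp]
    rw [lt_div_iff₀ hFpos]
    have hXF : (1 - a ^ 2) / (1 + a ^ 2) / 4
          * ((1 - b) ^ 2 / ((1 - b ^ 2) + 4 * ((q:ℝ)/r) * b)) * fsLq lap r q
        = ((1 + a ^ 2) * (1 - b ^ 2) + 2 * q * b * (1 - a ^ 2))
            / (4 * ((1 + a ^ 2) * ((1 - b ^ 2) + 4 * ((q:ℝ)/r) * b))) := by
      rw [hF]
      have hne1 : (1 + a ^ 2) ≠ 0 := by positivity
      have hne2 : ((1 - b ^ 2) + 4 * ((q:ℝ)/r) * b) ≠ 0 := hD.ne'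
      have hne3 : (1 - b) ≠ 0 := hb3.ne'
      have hne4 : (1 - a ^ 2) ≠ 0 := ha2.ne'
      field_simp
    rw [hXF, div_lt_iff₀ (by positivity)]
    nlinarith [key2]
  constructor
  · rw [integral_lap r hr]
    exact hmain
  · have hd1 : (∑' k : ℤ, lap ((k:ℝ)/r) * lap ((k:ℝ)/r)) = (1 + a ^ 2) * (1 - a ^ 2)⁻¹ := by
      have he : ∀ k : ℤ, lap ((k:ℝ)/r) * lap ((k:ℝ)/r) = (a ^ 2) ^ k.natAbs := by
        intro k
        rw [lap_int r hr k, ← ha_def, ← pow_add, ← pow_mul, two_mul]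
      rw [tsum_congr he,
        (hasSum_geom_int_all (sq_nonneg a) (by nlinarith : a ^ 2 < 1)).tsum_eq]
    have hd2 : (∑' k : ℤ, lap ((k:ℝ)/r)) = (1 + a) * (1 - a)⁻¹ := by
      have he : ∀ k : ℤ, lap ((k:ℝ)/r) = a ^ k.natAbs := by
        intro k
        rw [lap_int r hr k, ← ha_def]
      rw [tsum_congr he, (hasSum_geom_int_all ha0.le ha1).tsum_eq]
    rw [hd1, hd2]
    have h1a : (0:ℝ) < 1 - a := by linarith
    have hmu : (1/2:ℝ) ≤ ((1 + a ^ 2) * (1 - a ^ 2)⁻¹) / ((1 + a) * (1 - a)⁻¹) := by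
      have e : ((1 + a ^ 2) * (1 - a ^ 2)⁻¹) / ((1 + a) * (1 - a)⁻¹)
          = (1 + a ^ 2) / (1 + a) ^ 2 := by
        have hfac : (1:ℝ) - a ^ 2 = (1 - a) * (1 + a) := by ring
        rw [hfac]
        have hne1 : (1:ℝ) - a ≠ 0 := h1a.ne'
        have hne2 : (1:ℝ) + a ≠ 0 := by positivity
        field_simp
      rw [e, le_div_iff₀ (by positivity)]
      nlinarith [sq_nonneg (1 - a)]
    have hsq : (1/2:ℝ) ^ 2 ≤ (((1 + a ^ 2) * (1 - a ^ 2)⁻¹) / ((1 + a) * (1 - a)⁻¹)) ^ 2 :=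
      pow_le_pow_left₀ (by norm_num) hmu 2
    calc Real.tanh (2/r) / 4 * El (q/r) < (1/2:ℝ) ^ 2 / fsLq lap r q := hmain
      _ ≤ (((1 + a ^ 2) * (1 - a ^ 2)⁻¹) / ((1 + a) * (1 - a)⁻¹)) ^ 2 / fsLq lap r q := by
          gcongr


end
end
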